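/- arXiv:2110.15291 — 4 statements merged into one kernel-verified Lean document; each statement's English description precedes it below -/
import Mathlib

section
/- Let G be a graph. The chromatic polynomial of G equals the polynomial obtained from the chromatic symmetric function of G by expanding over the power-sum basis and replacing each p_λ with x^{ℓ(λ)}. That is, if X_G = Σ_λ a_λ p_λ, then χ_G(x) = Σ_λ a_λ x^{ℓ(λ)}. -/
open Polynomial

noncomputable section
open scoped Classical

/-- The weighted chromatic symmetric function of a (vertex-weighted) finite simple graph,
as a formal power series in the variables `x_0, x_1, x_2, …`: the coefficient of a monomial
`d` is the number of proper colourings `κ : V → ℕ` such that for each colour `i`, the total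
weight of vertices coloured `i` is `d i`. -/
def wcsf {V : Type} [Fintype V] (G : SimpleGraph V) (ω : V → ℕ) : MvPowerSeries ℕ ℚ :=
  fun d => (Nat.card {κ : V → ℕ // (∀ u v, G.Adj u v → κ u ≠ κ v) ∧
    ∀ i : ℕ, ∑ v ∈ Finset.univ.filter (fun v => κ v = i), ω v = d i} : ℚ)

/-- The (unweighted) chromatic symmetric function. -/
def csf {V : Type} [Fintype V] (G : SimpleGraph V) : MvPowerSeries ℕ ℚ :=
  wcsf G (fun _ => 1)

/-- `XP μ` is the chromatic symmetric function of the disjoint union of paths whose sizes are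
given by the multiset `μ` (the chromatic symmetric function is multiplicative over disjoint
unions). -/
def XP (μ : Multiset ℕ) : MvPowerSeries ℕ ℚ :=
  (μ.map (fun m => csf (SimpleGraph.pathGraph m))).prod

/-- The power-sum symmetric function `p_n = Σ_i x_i^n`. -/
def psum (n : ℕ) : MvPowerSeries ℕ ℚ :=
  fun d => if ∃ i, d = Finsupp.single i n then 1 else 0

/-- The power-sum symmetric function `p_μ`. -/
def pp (μ : Multiset ℕ) : MvPowerSeries ℕ ℚ := (μ.map psum).prod

/-- `P` is the chromatic polynomial of `G`: `P(k)` counts proper `k`-colourings for all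
positive integers `k`. -/
def IsChromaticPoly {V : Type} [Fintype V] (G : SimpleGraph V) (P : Polynomial ℚ) : Prop :=
  ∀ k : ℕ, 0 < k → P.eval (k : ℚ) =
    Nat.card {c : V → Fin k // ∀ u v, G.Adj u v → c u ≠ c v}

/-- The polynomial `Σ_λ a_λ x^{ℓ(λ)}` built from coefficients `a` indexed by partitions of
`n`; when `a` gives the path-basis coefficients of `X_G` this is the tree polynomial `τ_G`,
and when `a` gives the power-sum coefficients it is the chromatic polynomial. -/
def basisPoly (n : ℕ) (a : n.Partition → ℚ) : Polynomial ℚ :=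
  ∑ l : n.Partition, Polynomial.C (a l) * Polynomial.X ^ l.parts.card

/-! ### Auxiliary material -/

/-- The finset of exponent vectors supported in `[0,k)` with total degree `n`. -/
def SS (k n : ℕ) : Finset (ℕ →₀ ℕ) := Finset.finsuppAntidiag (Finset.range k) n

lemma mem_SS {k n : ℕ} {d : ℕ →₀ ℕ} :
    d ∈ SS k n ↔ (Finset.range k).sum ⇑d = n ∧ d.support ⊆ Finset.range k := by
  simp [SS, Finset.mem_finsuppAntidiag]

lemma psum_hom {m : ℕ} {d : ℕ →₀ ℕ} (h : psum m d ≠ 0) : d.sum (fun _ x => x) = m := by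
  rw [psum] at h
  split at h
  · next hex =>
    obtain ⟨i, rfl⟩ := hex
    simp [Finsupp.sum_single_index]
  · exact absurd rfl h

lemma pp_hom {μ : Multiset ℕ} {d : ℕ →₀ ℕ} (h : pp μ d ≠ 0) : d.sum (fun _ x => x) = μ.sum := by
  induction μ using Multiset.induction generalizing d with
  | empty =>
    rw [pp, Multiset.map_zero, Multiset.prod_zero] at h
    rw [show (1 : MvPowerSeries ℕ ℚ) d = MvPowerSeries.coeff d 1 from rfl,
      MvPowerSeries.coeff_one] at h
    rcases eq_or_ne d 0 with rfl | hd
    · simp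
    · simp [hd] at h
  | cons m μ ih =>
    rw [pp, Multiset.map_cons, Multiset.prod_cons] at h
    have h' : MvPowerSeries.coeff d (psum m * (μ.map psum).prod) ≠ 0 := h
    rw [MvPowerSeries.coeff_mul] at h'
    replace h := h'
    obtain ⟨p, hp, hne⟩ := Finset.exists_ne_zero_of_sum_ne_zero h
    rw [Finset.HasAntidiagonal.mem_antidiagonal] at hp
    have h1 : psum m p.1 ≠ 0 := fun hz => hne (by simp [MvPowerSeries.coeff_apply, hz])
    have h2 : pp μ p.2 ≠ 0 := fun hz => hne (by
      simp only [MvPowerSeries.coeff_apply, mul_eq_zero]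
      exact Or.inr hz)
    have := psum_hom h1
    have := ih h2
    rw [← hp, Multiset.sum_cons]
    rw [Finsupp.sum_add_index' (fun _ => rfl) (fun _ _ _ => rfl)]
    omega

lemma sum_SS_mul (k : ℕ) (f g : MvPowerSeries ℕ ℚ) (mf ng : ℕ)
    (hf : ∀ d, f d ≠ 0 → d.sum (fun _ x => x) = mf)
    (hg : ∀ d, g d ≠ 0 → d.sum (fun _ x => x) = ng) :
    ∑ d ∈ SS k (mf + ng), (f * g) d =
      (∑ d ∈ SS k mf, f d) * (∑ d ∈ SS k ng, g d) := by
  have hsum : ∀ (d : ℕ →₀ ℕ), d.support ⊆ Finset.range k →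
      (Finset.range k).sum ⇑d = d.sum (fun _ x => x) := by
    intro d hd
    rw [Finsupp.sum_of_support_subset d hd _ (fun _ _ => rfl)]
  -- rewrite LHS as a sum over a biUnion of antidiagonals
  have hdisj : (SS k (mf + ng) : Set (ℕ →₀ ℕ)).PairwiseDisjoint Finset.HasAntidiagonal.antidiagonal := by
    intro d1 _ d2 _ hne
    refine Finset.disjoint_left.2 fun p hp1 hp2 => ?_
    rw [Finset.HasAntidiagonal.mem_antidiagonal] at hp1 hp2
    exact hne (hp1 ▸ hp2)
  have hL : ∑ d ∈ SS k (mf + ng), (f * g) d =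
      ∑ p ∈ (SS k (mf + ng)).biUnion Finset.HasAntidiagonal.antidiagonal, f p.1 * g p.2 := by
    rw [Finset.sum_biUnion hdisj]
    refine Finset.sum_congr rfl fun d _ => ?_
    have hc : (f * g) d = MvPowerSeries.coeff d (f * g) := rfl
    rw [hc, MvPowerSeries.coeff_mul]
    rfl
  rw [hL]
  refine Eq.trans ?_ ((Finset.sum_product' (SS k mf) (SS k ng) (fun u v => f u * g v)).trans
    (Finset.sum_mul_sum (SS k mf) (SS k ng) (fun d => f d) (fun d => g d)).symm)
  symm
  apply Finset.sum_subset
  · rintro ⟨u, v⟩ huv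
    rw [Finset.mem_product] at huv
    obtain ⟨hu, hv⟩ := huv
    rw [mem_SS] at hu hv
    rw [Finset.mem_biUnion]
    refine ⟨u + v, ?_, ?_⟩
    · rw [mem_SS]
      constructor
      · rw [← hu.1, ← hv.1, ← Finset.sum_add_distrib]
        exact Finset.sum_congr rfl fun i _ => rfl
      · exact (Finsupp.support_add).trans (Finset.union_subset hu.2 hv.2)
    · rw [Finset.HasAntidiagonal.mem_antidiagonal]
  · rintro ⟨u, v⟩ hp hnp
    by_contra hne
    have hfu : f u ≠ 0 := fun hz => hne (by simp [hz])
    have hgv : g v ≠ 0 := fun hz => hne (by simp [hz])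
    rw [Finset.mem_biUnion] at hp
    obtain ⟨d, hd, hpd⟩ := hp
    rw [Finset.HasAntidiagonal.mem_antidiagonal] at hpd
    rw [mem_SS] at hd
    have hus : u.support ⊆ Finset.range k := by
      refine subset_trans ?_ (hpd ▸ hd.2)
      intro i hi
      rw [Finsupp.mem_support_iff] at hi ⊢
      simp only [Finsupp.add_apply]
      omega
    have hvs : v.support ⊆ Finset.range k := by
      refine subset_trans ?_ (hpd ▸ hd.2)
      intro i hi
      rw [Finsupp.mem_support_iff] at hi ⊢
      simp only [Finsupp.add_apply]
      omega
    apply hnp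
    rw [Finset.mem_product, mem_SS, mem_SS]
    exact ⟨⟨by rw [hsum u hus]; exact hf u hfu, hus⟩,
      ⟨by rw [hsum v hvs]; exact hg v hgv, hvs⟩⟩

lemma sum_SS_psum {k m : ℕ} (hm : 0 < m) : ∑ d ∈ SS k m, psum m d = (k : ℚ) := by
  have : ∑ d ∈ SS k m, psum m d =
      ((SS k m).filter (fun d => ∃ i, d = Finsupp.single i m)).card := by
    rw [Finset.card_filter]
    push_cast
    exact Finset.sum_congr rfl fun d _ => rfl
  rw [this]
  have himg : (SS k m).filter (fun d => ∃ i, d = Finsupp.single i m) =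
      (Finset.range k).image (fun i => Finsupp.single i m) := by
    ext d
    simp only [Finset.mem_filter, Finset.mem_image, mem_SS]
    constructor
    · rintro ⟨⟨hsum, hsupp⟩, i, rfl⟩
      refine ⟨i, ?_, rfl⟩
      apply hsupp
      rw [Finsupp.mem_support_iff, Finsupp.single_eq_same]
      omega
    · rintro ⟨i, hi, rfl⟩
      refine ⟨⟨?_, ?_⟩, i, rfl⟩
      · rw [Finset.sum_eq_single i (fun j _ hj => Finsupp.single_eq_of_ne' (Ne.symm hj))
          (fun h => absurd hi h)]
        exact Finsupp.single_eq_same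
      · rw [Finsupp.support_single_ne_zero i hm.ne']
        simpa using hi
  rw [himg, Finset.card_image_of_injective _ (Finsupp.single_left_injective hm.ne'),
    Finset.card_range]

lemma SS_zero (k : ℕ) : SS k 0 = {0} := by
  ext d
  simp only [mem_SS, Finset.mem_singleton]
  constructor
  · rintro ⟨hsum, hsupp⟩
    ext i
    simp only [Finsupp.coe_zero, Pi.zero_apply]
    by_contra hne
    have hi : i ∈ Finset.range k := hsupp (Finsupp.mem_support_iff.2 hne)
    have hle := Finset.single_le_sum (f := ⇑d) (fun j _ => Nat.zero_le _) hi
    rw [show ∑ j ∈ Finset.range k, d j = (Finset.range k).sum ⇑d from rfl, hsum] at hle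
    omega
  · rintro rfl
    simp

lemma sum_SS_pp (k : ℕ) : ∀ (μ : Multiset ℕ), (∀ x ∈ μ, 0 < x) →
    ∑ d ∈ SS k μ.sum, pp μ d = (k : ℚ) ^ Multiset.card μ := by
  intro μ
  induction μ using Multiset.induction with
  | empty =>
    intro _
    rw [Multiset.sum_zero, SS_zero]
    refine (Finset.sum_singleton (fun d => pp 0 d) 0).trans ?_
    have h1 : pp 0 (0 : ℕ →₀ ℕ) = MvPowerSeries.coeff 0 (1 : MvPowerSeries ℕ ℚ) := by
      rw [pp, Multiset.map_zero, Multiset.prod_zero]; rfl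
    rw [h1, MvPowerSeries.coeff_one]
    simp
  | cons m μ ih =>
    intro hp
    have hpp : pp (m ::ₘ μ) = psum m * pp μ := by
      rw [pp, Multiset.map_cons, Multiset.prod_cons]; rfl
    rw [Multiset.sum_cons, hpp,
      sum_SS_mul k (psum m) (pp μ) m μ.sum (fun d h => psum_hom h) (fun d h => pp_hom h),
      sum_SS_psum (hp m (Multiset.mem_cons_self m μ)),
      ih (fun x hx => hp x (Multiset.mem_cons_of_mem hx)),
      Multiset.card_cons, pow_succ]
    ring

/-- The colour-count vector of a colouring with `k` colours. -/
def cnt {V : Type} [Fintype V] {k : ℕ} (c : V → Fin k) : ℕ →₀ ℕ :=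
  ∑ v : V, Finsupp.single ((c v : ℕ)) 1

lemma cnt_apply {V : Type} [Fintype V] {k : ℕ} (c : V → Fin k) (i : ℕ) :
    cnt c i = (Finset.univ.filter (fun v => (c v : ℕ) = i)).card := by
  rw [cnt, Finset.sum_apply', Finset.card_filter]
  exact Finset.sum_congr rfl fun v _ => Finsupp.single_apply

lemma cnt_mem {V : Type} [Fintype V] {k n : ℕ} (hn : Fintype.card V = n) (c : V → Fin k) :
    cnt c ∈ SS k n := by
  rw [mem_SS]
  constructor
  · have h1 : (Finset.range k).sum ⇑(cnt c) =
        ∑ i ∈ Finset.range k, ∑ v : V, ((Finsupp.single ((c v : ℕ)) 1) i) :=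
      Finset.sum_congr rfl (fun i _ => by rw [cnt, Finset.sum_apply'])
    rw [h1, Finset.sum_comm]
    have h2 : ∀ v : V, ∑ i ∈ Finset.range k, ((Finsupp.single ((c v : ℕ)) 1) i) = 1 := by
      intro v
      rw [Finset.sum_eq_single ((c v : ℕ)) (fun j _ hj => Finsupp.single_eq_of_ne' (Ne.symm hj))
        (fun h => absurd (Finset.mem_range.2 (c v).isLt) h)]
      exact Finsupp.single_eq_same
    rw [Finset.sum_congr rfl (fun v _ => h2 v)]
    simp [hn]
  · intro i hi
    rw [Finsupp.mem_support_iff, cnt_apply] at hi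
    obtain ⟨v, hv⟩ := Finset.card_pos.mp (Nat.pos_of_ne_zero hi)
    rw [Finset.mem_filter] at hv
    exact Finset.mem_range.2 (hv.2 ▸ (c v).isLt)

lemma csf_apply {V : Type} [Fintype V] (G : SimpleGraph V) (d : ℕ →₀ ℕ) :
    csf G d = (Nat.card {κ : V → ℕ // (∀ u v, G.Adj u v → κ u ≠ κ v) ∧
      ∀ i : ℕ, (Finset.univ.filter (fun v => κ v = i)).card = d i} : ℚ) := by
  have h0 : csf G d = (Nat.card {κ : V → ℕ // (∀ u v, G.Adj u v → κ u ≠ κ v) ∧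
      ∀ i : ℕ, ∑ v ∈ Finset.univ.filter (fun v => κ v = i), (1:ℕ) = d i} : ℚ) := rfl
  rw [h0]
  norm_cast
  exact Nat.card_congr (Equiv.subtypeEquivRight fun κ => by simp)

lemma card_fiber {V : Type} [Fintype V] (G : SimpleGraph V) {k n : ℕ} {d : ℕ →₀ ℕ}
    (hd : d ∈ SS k n) :
    Nat.card {κ : V → ℕ // (∀ u v, G.Adj u v → κ u ≠ κ v) ∧
      ∀ i : ℕ, (Finset.univ.filter (fun v => κ v = i)).card = d i} =
    (Finset.univ.filter (fun c : V → Fin k =>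
      (∀ u v, G.Adj u v → c u ≠ c v) ∧ cnt c = d)).card := by
  rw [← Fintype.card_subtype, ← Nat.card_eq_fintype_card]
  apply Nat.card_congr
  have bnd : ∀ (κ : V → ℕ), (∀ i : ℕ, (Finset.univ.filter (fun v => κ v = i)).card = d i) →
      ∀ v, κ v < k := by
    intro κ hκ v
    have hpos : 0 < d (κ v) := by
      rw [← hκ (κ v)]
      exact Finset.card_pos.2 ⟨v, Finset.mem_filter.2 ⟨Finset.mem_univ v, rfl⟩⟩
    exact Finset.mem_range.1 ((mem_SS.1 hd).2 (Finsupp.mem_support_iff.2 hpos.ne'))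
  refine ⟨fun x => ⟨fun v => ⟨x.1 v, bnd x.1 x.2.2 v⟩, ?_, ?_⟩,
    fun y => ⟨fun v => (y.1 v : ℕ), ?_, ?_⟩, ?_, ?_⟩
  · intro u w h hh
    exact x.2.1 u w h (by simpa using congrArg Fin.val hh)
  · ext i
    rw [cnt_apply, ← x.2.2 i]
  · intro u w h hh
    exact y.2.1 u w h (Fin.val_injective hh)
  · intro i
    have h := DFunLike.congr_fun y.2.2 i
    rw [cnt_apply] at h
    exact h
  · intro x
    apply Subtype.ext
    funext v
    rfl
  · intro y
    apply Subtype.ext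
    funext v
    apply Fin.ext
    rfl

lemma sum_SS_csf {V : Type} [Fintype V] (G : SimpleGraph V) (k n : ℕ)
    (hn : Fintype.card V = n) :
    ∑ d ∈ SS k n, csf G d =
      (Nat.card {c : V → Fin k // ∀ u v, G.Adj u v → c u ≠ c v} : ℚ) := by
  have h1 : ∀ d ∈ SS k n, csf G d = (((Finset.univ.filter (fun c : V → Fin k =>
      (∀ u v, G.Adj u v → c u ≠ c v) ∧ cnt c = d)).card : ℕ) : ℚ) := by
    intro d hd
    rw [csf_apply, card_fiber G hd]
  rw [Finset.sum_congr rfl h1, ← Nat.cast_sum]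
  congr 1
  rw [Nat.card_eq_fintype_card, Fintype.card_subtype,
    Finset.card_eq_sum_card_fiberwise (f := cnt) (t := SS k n) (fun c _ => cnt_mem hn c)]
  exact Finset.sum_congr rfl fun d _ => by rw [Finset.filter_filter]

/-- if `X_G = Σ_{λ ⊢ n} a_λ p_λ` is the power-sum expansion of the chromatic
symmetric function of a graph `G` on `n` vertices, then the chromatic polynomial of `G` is
`χ_G(x) = Σ_λ a_λ x^{ℓ(λ)}`. -/
theorem stmt_5 {V : Type} [Fintype V] (G : SimpleGraph V) (n : ℕ)
    (hn : Fintype.card V = n) (a : n.Partition → ℚ)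
    (ha : csf G = ∑ l : n.Partition, a l • pp l.parts)
    (P : Polynomial ℚ) (hP : IsChromaticPoly G P) :
    P = basisPoly n a := by
  apply Polynomial.eq_of_infinite_eval_eq
  refine Set.infinite_of_injective_forall_mem (f := fun m : ℕ => ((m + 1 : ℕ) : ℚ)) ?_ ?_
  · intro x y h
    have h' : ((x + 1 : ℕ) : ℚ) = ((y + 1 : ℕ) : ℚ) := h
    have : (x + 1 : ℕ) = (y + 1 : ℕ) := by exact_mod_cast h'
    omega
  · intro m
    simp only [Set.mem_setOf_eq]
    have hk : 0 < m + 1 := Nat.succ_pos m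
    rw [hP (m + 1) hk, ← sum_SS_csf G (m + 1) n hn, ha]
    have h3 : ∀ (s : Finset n.Partition) (d : ℕ →₀ ℕ), (∑ l ∈ s, a l • pp l.parts) d
        = ∑ l ∈ s, a l * pp l.parts d := by
      intro s d
      induction s using Finset.cons_induction with
      | empty => rfl
      | cons l s hl ih =>
        rw [Finset.sum_cons, Finset.sum_cons, ← ih]
        rfl
    rw [Finset.sum_congr rfl fun d _ => h3 Finset.univ d, Finset.sum_comm]
    have h4 : ∀ l : n.Partition, ∑ d ∈ SS (m + 1) n, a l * pp l.parts d
        = a l * ((m + 1 : ℕ) : ℚ) ^ l.parts.card := by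
      intro l
      refine (Finset.mul_sum _ _ _).symm.trans ?_
      congr 1
      have hh := sum_SS_pp (m + 1) l.parts (fun x hx => l.parts_pos hx)
      rw [l.parts_sum] at hh
      exact_mod_cast hh
    rw [Finset.sum_congr rfl fun l _ => h4 l]
    simp [basisPoly, Polynomial.eval_finset_sum]
end
end

section
/- For any tree T, the tree polynomial of T is τ_T(x) = x. -/
open Polynomial

noncomputable section
open scoped Classical

section Aux
open SimpleGraph

lemma internal_deg {V : Type} [Fintype V] {G : SimpleGraph V} {a b : V}
    (p : G.Walk a b) (hp : p.IsPath) {v : V} (hv : v ∈ p.support)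
    (ha : v ≠ a) (hb : v ≠ b) : 2 ≤ G.degree v := by
  induction p with
  | nil => simp at hv; exact absurd hv ha
  | @cons x y c h q ih =>
    rw [SimpleGraph.Walk.support_cons] at hv
    rcases List.mem_cons.1 hv with h1 | h2
    · exact absurd h1 ha
    rcases eq_or_ne v y with rfl | hvy
    · cases q with
      | nil => exact absurd rfl hb
      | @cons _ z _ hadj q2 =>
        have hx : x ∈ G.neighborFinset v := by
          rw [SimpleGraph.mem_neighborFinset]; exact h.symm
        have hz : z ∈ G.neighborFinset v := by
          rw [SimpleGraph.mem_neighborFinset]; exact hadj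
        have hxz : x ≠ z := by
          have hns := (SimpleGraph.Walk.cons_isPath_iff _ _).1 hp
          intro he
          exact hns.2 (by rw [he]; exact List.mem_cons_of_mem _ (SimpleGraph.Walk.start_mem_support q2))
        rw [← SimpleGraph.card_neighborFinset_eq_degree]
        exact Finset.one_lt_card.2 ⟨x, hx, z, hz, hxz⟩
    · exact ih hp.of_cons h2 hvy hb

lemma lift_reachable {V : Type} {G : SimpleGraph V} {v : V} {a b : V}
    (p : G.Walk a b) (hp : v ∉ p.support) (ha : a ≠ v) (hb : b ≠ v) :
    (G.comap (Subtype.val : {u : V // u ≠ v} → V)).Reachable ⟨a, ha⟩ ⟨b, hb⟩ := by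
  induction p with
  | nil => exact Reachable.refl _
  | @cons x y c h q ih =>
    rw [SimpleGraph.Walk.support_cons] at hp
    have hy : y ≠ v := by
      intro he
      subst he
      exact hp (List.mem_cons_of_mem _ (SimpleGraph.Walk.start_mem_support q))
    have hadj : (G.comap (Subtype.val : {u : V // u ≠ v} → V)).Adj ⟨x, ha⟩ ⟨y, hy⟩ := h
    exact Reachable.trans hadj.reachable (ih (fun hm => hp (List.mem_cons_of_mem _ hm)) hy hb)

lemma card_colorings_iso {V W : Type} {G : SimpleGraph V} {H : SimpleGraph W}
    (e : V ≃ W) (he : ∀ u w : V, G.Adj u w ↔ H.Adj (e u) (e w)) (k : ℕ) :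
    Nat.card {c : V → Fin k // ∀ u w, G.Adj u w → c u ≠ c w}
    = Nat.card {c : W → Fin k // ∀ u w, H.Adj u w → c u ≠ c w} := by
  apply Nat.card_congr
  refine ⟨fun c => ⟨c.1 ∘ e.symm, ?_⟩, fun c => ⟨c.1 ∘ e, ?_⟩, ?_, ?_⟩
  · intro u w h
    have := (he (e.symm u) (e.symm w)).2 (by simpa using h)
    exact c.2 _ _ this
  · intro u w h
    exact c.2 _ _ ((he u w).1 h)
  · intro c; apply Subtype.ext; funext u; simp
  · intro c; apply Subtype.ext; funext u; simp

lemma leaf_count {V : Type} [Fintype V] (G : SimpleGraph V) (v u0 : V)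
    (hvu : G.Adj v u0) (hleaf : ∀ w, G.Adj v w → w = u0) (k : ℕ) :
    Nat.card {c : V → Fin k // ∀ u w, G.Adj u w → c u ≠ c w}
      = (k - 1) * Nat.card {c : {u : V // u ≠ v} → Fin k //
          ∀ u w, (G.comap (Subtype.val : {u : V // u ≠ v} → V)).Adj u w → c u ≠ c w} := by
  classical
  have hu0v : u0 ≠ v := fun h => G.irrefl (h ▸ hvu)
  set G' := G.comap (Subtype.val : {u : V // u ≠ v} → V) with hG'
  let φ : {c : V → Fin k // ∀ u w, G.Adj u w → c u ≠ c w} →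
      {c : {u : V // u ≠ v} → Fin k // ∀ u w, G'.Adj u w → c u ≠ c w} :=
    fun c => ⟨fun u => c.1 u.1, fun u w h => c.2 _ _ h⟩
  rw [Nat.card_eq_fintype_card, Nat.card_eq_fintype_card]
  have hsum := Finset.card_eq_sum_card_fiberwise
    (f := φ) (s := Finset.univ) (t := Finset.univ) (fun x _ => Finset.mem_univ _)
  rw [Finset.card_univ] at hsum
  rw [hsum]
  have hfib : ∀ c' : {c : {u : V // u ≠ v} → Fin k // ∀ u w, G'.Adj u w → c u ≠ c w},
      (Finset.univ.filter (fun c => φ c = c')).card = k - 1 := by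
    intro c'
    rw [← Fintype.card_subtype]
    have e : {c // φ c = c'} ≃ {x : Fin k // x ≠ c'.1 ⟨u0, hu0v⟩} := by
      refine ⟨fun c => ⟨c.1.1 v, ?_⟩, fun x => ⟨⟨fun u => if h : u = v then x.1 else c'.1 ⟨u, h⟩, ?_⟩, ?_⟩, ?_, ?_⟩
      · have h1 := congrFun (congrArg Subtype.val c.2) ⟨u0, hu0v⟩
        rw [← h1]
        exact c.1.2 _ _ hvu
      · intro u w h
        dsimp only
        by_cases hu : u = v
        · subst hu
          have hw : w = u0 := hleaf w h
          subst hw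
          simp only [dif_pos rfl, dif_neg hu0v]
          exact x.2
        · by_cases hw : w = v
          · subst hw
            have hu' : u = u0 := hleaf u h.symm
            subst hu'
            simp only [dif_neg hu0v, dif_pos rfl]
            exact fun he => x.2 he.symm
          · simp only [dif_neg hu, dif_neg hw]
            exact c'.2 ⟨u, hu⟩ ⟨w, hw⟩ h
      · apply Subtype.ext; funext u
        exact dif_neg u.2
      · intro c
        apply Subtype.ext; apply Subtype.ext; funext u
        by_cases h : u = v
        · subst h; exact (dif_pos rfl).trans rfl
        · exact (dif_neg h).trans (congrFun (congrArg Subtype.val c.2) ⟨u, h⟩).symm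
      · intro x
        apply Subtype.ext
        exact dif_pos rfl
    rw [Fintype.card_congr e, Fintype.card_subtype_compl, Fintype.card_subtype_eq, Fintype.card_fin]
  rw [Finset.sum_congr rfl (fun c' _ => hfib c')]
  rw [Finset.sum_const, Finset.card_univ, smul_eq_mul, mul_comm]

lemma tree_count : ∀ (n : ℕ) {V : Type} [Fintype V] (T : SimpleGraph V), T.IsTree →
    Fintype.card V = n → ∀ k : ℕ,
    Nat.card {c : V → Fin k // ∀ u w, T.Adj u w → c u ≠ c w} = k * (k - 1) ^ (n - 1) := by
  intro n
  induction n with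
  | zero =>
    intro V _ T hT hcard k
    have : Nonempty V := hT.isConnected.nonempty
    have := Fintype.card_pos (α := V)
    omega
  | succ n IH =>
    intro V _ T hT hcard k
    rcases Nat.eq_zero_or_pos n with rfl | hn
    · -- card V = 1
      have hsub : Subsingleton V := Fintype.card_le_one_iff_subsingleton.1 (le_of_eq hcard)
      have : ∀ c : V → Fin k, ∀ u w, T.Adj u w → c u ≠ c w := by
        intro c u w h
        exact absurd (Subsingleton.elim u w) (T.ne_of_adj h)
      rw [Nat.card_congr (Equiv.subtypeUnivEquiv this)]
      rw [Nat.card_eq_fintype_card, Fintype.card_fun, Fintype.card_fin, hcard]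
      simp
    · -- card V = n + 1 ≥ 2
      have hone : 1 < Fintype.card V := by omega
      -- every vertex has positive degree
      have hpos : ∀ v : V, 0 < T.degree v := by
        intro v
        rw [T.degree_pos_iff_exists_adj]
        obtain ⟨w, hw⟩ := Fintype.exists_ne_of_one_lt_card hone v
        obtain ⟨p⟩ := hT.isConnected.preconnected v w
        cases p with
        | nil => exact absurd rfl hw.symm
        | cons h q => exact ⟨_, h⟩
      -- there is a leaf
      have hleafex : ∃ v : V, T.degree v = 1 := by
        by_contra hno
        push_neg at hno
        have h2 : ∀ v : V, 2 ≤ T.degree v := by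
          intro v
          have := hpos v
          have := hno v
          omega
        have hsum : ∑ v : V, T.degree v = 2 * T.edgeFinset.card :=
          T.sum_degrees_eq_twice_card_edges
        have hedge := hT.card_edgeFinset
        have hge : 2 * Fintype.card V ≤ ∑ v : V, T.degree v := by
          calc 2 * Fintype.card V = ∑ _v : V, 2 := by
                rw [Finset.sum_const, Finset.card_univ, smul_eq_mul, mul_comm]
            _ ≤ ∑ v : V, T.degree v := Finset.sum_le_sum (fun v _ => h2 v)
        omega
      obtain ⟨v, hdeg⟩ := hleafex
      have hcard1 : (T.neighborFinset v).card = 1 := by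
        rw [card_neighborFinset_eq_degree]; exact hdeg
      obtain ⟨u0, hu0⟩ := Finset.card_eq_one.1 hcard1
      have hvu : T.Adj v u0 := by
        rw [← mem_neighborFinset, hu0]; exact Finset.mem_singleton_self _
      have hleaf : ∀ w, T.Adj v w → w = u0 := by
        intro w hw
        have : w ∈ T.neighborFinset v := by rwa [mem_neighborFinset]
        rwa [hu0, Finset.mem_singleton] at this
      set T' := T.comap (Subtype.val : {u : V // u ≠ v} → V) with hT'
      have hcard' : Fintype.card {u : V // u ≠ v} = n := by
        rw [Fintype.card_subtype_compl, Fintype.card_subtype_eq]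
        omega
      have hu0v : u0 ≠ v := fun h => T.irrefl (h ▸ hvu)
      haveI : Nonempty {u : V // u ≠ v} := ⟨⟨u0, hu0v⟩⟩
      have htree' : T'.IsTree := by
        refine ⟨⟨?_⟩, ?_⟩
        · rintro ⟨a, ha⟩ ⟨b, hb⟩
          obtain ⟨w⟩ := hT.isConnected.preconnected a b
          let p := w.toPath
          have hvp : v ∉ (p : T.Walk a b).support := by
            intro hmem
            have := internal_deg (p : T.Walk a b) p.2 hmem
              (fun h => ha h.symm) (fun h => hb h.symm)
            omega
          exact lift_reachable _ hvp ha hb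
        · intro a c hc
          let f : T' →g T := ⟨Subtype.val, fun h => h⟩
          have hinj : Function.Injective (f : {u : V // u ≠ v} → V) :=
            Subtype.val_injective
          exact hT.IsAcyclic _
            ((SimpleGraph.Walk.map_isCycle_iff_of_injective hinj).2 hc)
      obtain ⟨m, rfl⟩ : ∃ m, n = m + 1 := ⟨n - 1, by omega⟩
      have := leaf_count T v u0 hvu hleaf k
      rw [this, IH T' htree' hcard' k]
      simp only [Nat.add_sub_cancel]
      ring

lemma path_count : ∀ (m : ℕ), 1 ≤ m → ∀ k : ℕ,
    Nat.card {c : Fin m → Fin k // ∀ u w, (pathGraph m).Adj u w → c u ≠ c w}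
      = k * (k - 1) ^ (m - 1) := by
  intro m
  induction m with
  | zero => omega
  | succ m IH =>
    intro _ k
    rcases Nat.eq_zero_or_pos m with rfl | hm
    · have hno : ∀ c : Fin 1 → Fin k, ∀ u w, (pathGraph 1).Adj u w → c u ≠ c w := by
        intro c u w h
        rw [pathGraph_adj] at h
        omega
      rw [Nat.card_congr (Equiv.subtypeUnivEquiv hno)]
      rw [Nat.card_eq_fintype_card, Fintype.card_fun, Fintype.card_fin, Fintype.card_fin]
      simp
    · -- leaf is the last vertex
      set v : Fin (m + 1) := ⟨m, by omega⟩ with hv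
      set u0 : Fin (m + 1) := ⟨m - 1, by omega⟩ with hu0
      have hvu : (pathGraph (m + 1)).Adj v u0 := by
        rw [pathGraph_adj]
        right; simp [hv, hu0]; omega
      have hleaf : ∀ w, (pathGraph (m + 1)).Adj v w → w = u0 := by
        intro w hw
        rw [pathGraph_adj] at hw
        have hwlt : (w : ℕ) < m + 1 := w.2
        apply Fin.ext
        simp [hv, hu0] at hw ⊢
        omega
      rw [leaf_count _ v u0 hvu hleaf k]
      have hiso : Nat.card {c : {u : Fin (m + 1) // u ≠ v} → Fin k //
            ∀ u w, ((pathGraph (m + 1)).comap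
              (Subtype.val : {u : Fin (m + 1) // u ≠ v} → Fin (m + 1))).Adj u w → c u ≠ c w}
          = Nat.card {c : Fin m → Fin k // ∀ u w, (pathGraph m).Adj u w → c u ≠ c w} := by
        let e : {u : Fin (m + 1) // u ≠ v} ≃ Fin m :=
          ⟨fun u => ⟨u.1.val, by
              have h1 : (u.1 : ℕ) < m + 1 := u.1.2
              have h2 : (u.1 : ℕ) ≠ m := fun h => u.2 (Fin.ext h)
              omega⟩,
           fun i => ⟨⟨i.val, by omega⟩, by
              intro h
              have := congrArg Fin.val h
              simp [hv] at this
              omega⟩,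
           fun u => Subtype.ext (Fin.ext rfl), fun i => Fin.ext rfl⟩
        refine card_colorings_iso e ?_ k
        intro u w
        show (pathGraph (m + 1)).Adj u.1 w.1 ↔ (pathGraph m).Adj (e u) (e w)
        rw [pathGraph_adj, pathGraph_adj]
        rfl
      rw [hiso]
      rw [IH hm k]
      have h2 : m - 1 + 1 = m := Nat.succ_pred_eq_of_pos hm
      simp only [Nat.add_sub_cancel]
      conv_rhs => rw [← h2]
      rw [pow_succ]
      ring

end Aux

-- distribution of a coloring
def cdist {V : Type} [Fintype V] (κ : V → ℕ) : ℕ →₀ ℕ :=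
  ∑ v : V, Finsupp.single (κ v) 1

lemma cdist_apply {V : Type} [Fintype V] (κ : V → ℕ) (i : ℕ) :
    cdist κ i = (Finset.univ.filter (fun v => κ v = i)).card := by
  rw [cdist]
  rw [Finset.sum_apply']
  rw [Finset.card_filter]
  exact Finset.sum_congr rfl (fun v _ => by rw [Finsupp.single_apply])

lemma cdist_sum {V : Type} [Fintype V] (κ : V → ℕ) :
    (cdist κ).sum (fun _ x => x) = Fintype.card V := by
  rw [cdist, ← Finsupp.sum_finset_sum_index (by simp) (by simp)]
  simp [Finsupp.sum_single_index]

lemma cdist_support {V : Type} [Fintype V] (κ : V → ℕ) {k : ℕ}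
    (hκ : ∀ v, κ v < k) : (cdist κ).support ⊆ Finset.range k := by
  intro i hi
  rw [Finsupp.mem_support_iff, cdist_apply] at hi
  rw [Finset.mem_range]
  obtain ⟨v, hv⟩ := Finset.card_pos.1 (Nat.pos_of_ne_zero hi)
  rw [Finset.mem_filter] at hv
  rw [← hv.2]
  exact hκ v

lemma csf_coeff {V : Type} [Fintype V] (G : SimpleGraph V) (d : ℕ →₀ ℕ) :
    MvPowerSeries.coeff d (csf G) = (Nat.card {κ : V → ℕ //
      (∀ u v, G.Adj u v → κ u ≠ κ v) ∧ cdist κ = d} : ℚ) := by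
  have h1 : MvPowerSeries.coeff d (csf G) = (Nat.card {κ : V → ℕ //
      (∀ u v, G.Adj u v → κ u ≠ κ v) ∧
      ∀ i : ℕ, ∑ v ∈ Finset.univ.filter (fun v => κ v = i), (1 : ℕ) = d i} : ℚ) := rfl
  rw [h1]
  congr 1
  apply Nat.card_congr
  apply Equiv.subtypeEquivRight
  intro κ
  have : ∀ i : ℕ, (∑ v ∈ Finset.univ.filter (fun v => κ v = i), (1 : ℕ))
      = cdist κ i := by
    intro i
    rw [cdist_apply]
    simp
  constructor
  · rintro ⟨h1, h2⟩
    exact ⟨h1, Finsupp.ext fun i => by rw [← this i, h2 i]⟩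
  · rintro ⟨h1, h2⟩
    exact ⟨h1, fun i => by rw [this i, h2]⟩

lemma csf_hom {V : Type} [Fintype V] (G : SimpleGraph V) (d : ℕ →₀ ℕ)
    (h : MvPowerSeries.coeff d (csf G) ≠ 0) :
    d.sum (fun _ x => x) = Fintype.card V := by
  rw [csf_coeff] at h
  have : Nat.card {κ : V → ℕ // (∀ u v, G.Adj u v → κ u ≠ κ v) ∧ cdist κ = d} ≠ 0 := by
    intro h0; rw [h0] at h; simp at h
  have hne := Nat.card_ne_zero.1 this
  obtain ⟨⟨κ, _, hκd⟩⟩ := hne.1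
  rw [← hκd, cdist_sum]

def evA (k m : ℕ) (S : MvPowerSeries ℕ ℚ) : ℚ :=
  ∑ d ∈ Finset.finsuppAntidiag (Finset.range k) m, MvPowerSeries.coeff d S

lemma evA_csf {V : Type} [Fintype V] (G : SimpleGraph V) (k : ℕ) :
    evA k (Fintype.card V) (csf G)
      = (Nat.card {c : V → Fin k // ∀ u w, G.Adj u w → c u ≠ c w} : ℚ) := by
  classical
  set C := {c : V → Fin k // ∀ u w, G.Adj u w → c u ≠ c w} with hC
  let D : C → (ℕ →₀ ℕ) := fun c => cdist (fun v => (c.1 v : ℕ))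
  have hDmem : ∀ c : C, D c ∈ Finset.finsuppAntidiag (Finset.range k) (Fintype.card V) := by
    intro c
    rw [Finset.mem_finsuppAntidiag']
    exact ⟨cdist_sum _, cdist_support _ (fun v => (c.1 v).2)⟩
  have hterm : ∀ d ∈ Finset.finsuppAntidiag (Finset.range k) (Fintype.card V),
      MvPowerSeries.coeff d (csf G) = ((Finset.univ.filter (fun c : C => D c = d)).card : ℚ) := by
    intro d hd
    rw [Finset.mem_finsuppAntidiag'] at hd
    rw [csf_coeff]
    rw [← Fintype.card_subtype]
    congr 1
    rw [← Nat.card_eq_fintype_card]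
    apply Nat.card_congr
    have hlt : ∀ κ : {κ : V → ℕ // (∀ u v, G.Adj u v → κ u ≠ κ v) ∧ cdist κ = d},
        ∀ v : V, κ.1 v < k := by
      intro κ v
      obtain ⟨κ, hκ1, hκ2⟩ := κ
      show κ v < k
      have h1 : κ v ∈ d.support := by
        rw [← hκ2, Finsupp.mem_support_iff, cdist_apply]
        have hv : v ∈ Finset.univ.filter (fun w => κ w = κ v) := by simp
        have := Finset.card_pos.2 ⟨v, hv⟩
        omega
      have := hd.2 h1
      rwa [Finset.mem_range] at this
    refine ⟨fun κ => ⟨⟨fun v => ⟨κ.1 v, hlt κ v⟩, ?_⟩, ?_⟩,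
      fun c => ⟨fun v => (c.1.1 v : ℕ), ?_, ?_⟩, ?_, ?_⟩
    · intro u w hadj h
      exact κ.2.1 u w hadj (congrArg Fin.val h)
    · exact κ.2.2
    · intro u w hadj h
      exact c.1.2 u w hadj (Fin.ext h)
    · exact c.2
    · intro κ
      apply Subtype.ext; funext v; rfl
    · intro c
      apply Subtype.ext; apply Subtype.ext; funext v; apply Fin.ext; rfl
  rw [evA, Finset.sum_congr rfl hterm]
  rw [← Nat.cast_sum]
  rw [← Finset.card_eq_sum_card_fiberwise (f := D) (s := Finset.univ)
    (t := Finset.finsuppAntidiag (Finset.range k) (Fintype.card V)) (fun c _ => hDmem c)]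
  rw [Finset.card_univ, Nat.card_eq_fintype_card]

lemma evA_one (k : ℕ) : evA k 0 1 = 1 := by
  have hA : Finset.finsuppAntidiag (Finset.range k) 0 = {0} := by
    ext f
    rw [Finset.mem_finsuppAntidiag, Finset.mem_singleton]
    constructor
    · rintro ⟨hsum, hsupp⟩
      ext i
      by_cases hi : i ∈ Finset.range k
      · have hle : f i ≤ ∑ j ∈ Finset.range k, f j := Finset.single_le_sum (fun _ _ => Nat.zero_le _) hi
        rw [hsum] at hle
        simpa using Nat.le_zero.1 hle
      · have : i ∉ f.support := fun hmem => hi (hsupp hmem)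
        simpa using Finsupp.notMem_support_iff.1 this
    · rintro rfl
      simp
  rw [evA, hA, Finset.sum_singleton]
  exact MvPowerSeries.coeff_zero_one

lemma evA_mul (k m1 m2 : ℕ) (S T : MvPowerSeries ℕ ℚ)
    (hS : ∀ d : ℕ →₀ ℕ, MvPowerSeries.coeff d S ≠ 0 → d.sum (fun _ x => x) = m1)
    (hT : ∀ d : ℕ →₀ ℕ, MvPowerSeries.coeff d T ≠ 0 → d.sum (fun _ x => x) = m2) :
    evA k (m1 + m2) (S * T) = evA k m1 S * evA k m2 T := by
  classical
  set A1 := Finset.finsuppAntidiag (Finset.range k) m1 with hA1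
  set A2 := Finset.finsuppAntidiag (Finset.range k) m2 with hA2
  set A12 := Finset.finsuppAntidiag (Finset.range k) (m1 + m2) with hA12
  have step1 : evA k (m1 + m2) (S * T)
      = ∑ d ∈ A12, ∑ p ∈ Finset.HasAntidiagonal.antidiagonal d,
          MvPowerSeries.coeff p.1 S * MvPowerSeries.coeff p.2 T := by
    rw [evA]
    exact Finset.sum_congr rfl (fun d _ => MvPowerSeries.coeff_mul d S T)
  have step2 : ∀ d ∈ A12, (∑ p ∈ Finset.HasAntidiagonal.antidiagonal d,
        MvPowerSeries.coeff p.1 S * MvPowerSeries.coeff p.2 T)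
      = ∑ p ∈ (A1 ×ˢ A2).filter (fun p => p.1 + p.2 = d),
          MvPowerSeries.coeff p.1 S * MvPowerSeries.coeff p.2 T := by
    intro d hd
    rw [Finset.mem_finsuppAntidiag'] at hd
    apply (Finset.sum_subset ?_ ?_).symm
    · intro p hp
      rw [Finset.mem_filter] at hp
      rw [Finset.HasAntidiagonal.mem_antidiagonal]
      exact hp.2
    · intro p hp hnp
      rw [Finset.HasAntidiagonal.mem_antidiagonal] at hp
      by_contra hne
      have hSne : MvPowerSeries.coeff p.1 S ≠ 0 := fun h => hne (by rw [h, zero_mul])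
      have hTne : MvPowerSeries.coeff p.2 T ≠ 0 := fun h => hne (by rw [h, mul_zero])
      have hs1 : p.1.support ⊆ Finset.range k := by
        intro i hi
        apply hd.2
        rw [Finsupp.mem_support_iff] at hi ⊢
        rw [← hp, Finsupp.add_apply]
        omega
      have hs2 : p.2.support ⊆ Finset.range k := by
        intro i hi
        apply hd.2
        rw [Finsupp.mem_support_iff] at hi ⊢
        rw [← hp, Finsupp.add_apply]
        omega
      apply hnp
      rw [Finset.mem_filter, Finset.mem_product]
      refine ⟨⟨?_, ?_⟩, hp⟩
      · rw [hA1, Finset.mem_finsuppAntidiag']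
        exact ⟨hS _ hSne, hs1⟩
      · rw [hA2, Finset.mem_finsuppAntidiag']
        exact ⟨hT _ hTne, hs2⟩
  have step3 : evA k (m1 + m2) (S * T)
      = ∑ p ∈ A1 ×ˢ A2, ∑ d ∈ A12, if p.1 + p.2 = d then
          MvPowerSeries.coeff p.1 S * MvPowerSeries.coeff p.2 T else 0 := by
    rw [step1, Finset.sum_congr rfl step2]
    rw [Finset.sum_congr rfl (fun d _ => Finset.sum_filter
      (fun p : (ℕ →₀ ℕ) × (ℕ →₀ ℕ) => p.1 + p.2 = d)
      (fun p => MvPowerSeries.coeff p.1 S * MvPowerSeries.coeff p.2 T))]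
    exact Finset.sum_comm
  rw [step3]
  have step4 : ∀ p ∈ A1 ×ˢ A2, (∑ d ∈ A12, if p.1 + p.2 = d then
      MvPowerSeries.coeff p.1 S * MvPowerSeries.coeff p.2 T else 0)
      = MvPowerSeries.coeff p.1 S * MvPowerSeries.coeff p.2 T := by
    intro p hp
    rw [Finset.mem_product] at hp
    rw [Finset.sum_ite_eq]
    have hmem : p.1 + p.2 ∈ A12 := by
      rw [hA12, Finset.mem_finsuppAntidiag']
      rw [hA1, Finset.mem_finsuppAntidiag'] at hp
      rw [hA2, Finset.mem_finsuppAntidiag'] at hp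
      constructor
      · rw [Finsupp.sum_add_index' (fun _ => rfl) (fun _ _ _ => rfl)]
        rw [hp.1.1, hp.2.1]
      · exact Finsupp.support_add.trans (Finset.union_subset hp.1.2 hp.2.2)
    rw [if_pos hmem]
  rw [Finset.sum_congr rfl step4, evA, evA, Finset.sum_mul_sum]
  exact Finset.sum_product (s := A1) (t := A2) (f := fun p : (ℕ →₀ ℕ) × (ℕ →₀ ℕ) =>
    MvPowerSeries.coeff p.1 S * MvPowerSeries.coeff p.2 T)

lemma XP_cons (m : ℕ) (μ : Multiset ℕ) :
    XP (m ::ₘ μ) = csf (SimpleGraph.pathGraph m) * XP μ := by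
  rw [XP, XP, Multiset.map_cons, Multiset.prod_cons]

lemma XP_hom (μ : Multiset ℕ) :
    ∀ d : ℕ →₀ ℕ, MvPowerSeries.coeff d (XP μ) ≠ 0 → d.sum (fun _ x => x) = μ.sum := by
  induction μ using Multiset.induction with
  | empty =>
    intro d hd
    rw [XP, Multiset.map_zero, Multiset.prod_zero] at hd
    rw [MvPowerSeries.coeff_one] at hd
    have : d = 0 := by
      by_contra h
      rw [if_neg h] at hd
      exact hd rfl
    subst this
    simp
  | cons m μ IH =>
    intro d hd
    rw [XP_cons, MvPowerSeries.coeff_mul] at hd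
    obtain ⟨p, hp, hne⟩ := Finset.exists_ne_zero_of_sum_ne_zero hd
    rw [Finset.HasAntidiagonal.mem_antidiagonal] at hp
    have h1 : MvPowerSeries.coeff p.1 (csf (SimpleGraph.pathGraph m)) ≠ 0 :=
      fun h => hne (by rw [h, zero_mul])
    have h2 : MvPowerSeries.coeff p.2 (XP μ) ≠ 0 :=
      fun h => hne (by rw [h, mul_zero])
    have e1 := csf_hom _ _ h1
    rw [Fintype.card_fin] at e1
    have e2 := IH _ h2
    rw [← hp, Finsupp.sum_add_index' (fun _ => rfl) (fun _ _ _ => rfl), e1, e2,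
      Multiset.sum_cons]

lemma evA_XP (μ : Multiset ℕ) (hμ : ∀ m ∈ μ, 1 ≤ m) (k : ℕ) (hk : 1 ≤ k) :
    evA k μ.sum (XP μ)
      = (μ.map (fun m => (k : ℚ) * ((k : ℚ) - 1) ^ (m - 1))).prod := by
  induction μ using Multiset.induction with
  | empty =>
    rw [Multiset.sum_zero, XP, Multiset.map_zero, Multiset.prod_zero, evA_one,
      Multiset.map_zero, Multiset.prod_zero]
  | cons m μ IH =>
    rw [Multiset.sum_cons, XP_cons]
    rw [evA_mul k m μ.sum _ _ (fun d hd => by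
        have := csf_hom _ _ hd; rwa [Fintype.card_fin] at this) (XP_hom μ)]
    rw [IH (fun x hx => hμ x (Multiset.mem_cons_of_mem hx))]
    have hm : 1 ≤ m := hμ m (Multiset.mem_cons_self m μ)
    have hcount : evA k m (csf (SimpleGraph.pathGraph m))
        = ((k * (k - 1) ^ (m - 1) : ℕ) : ℚ) := by
      have := evA_csf (SimpleGraph.pathGraph m) k
      rw [Fintype.card_fin] at this
      rw [this, path_count m hm k]
    rw [hcount, Multiset.map_cons, Multiset.prod_cons]
    congr 1
    push_cast [Nat.cast_sub hk]
    ring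

lemma card_le_sum' (μ : Multiset ℕ) (h : ∀ m ∈ μ, 1 ≤ m) :
    Multiset.card μ ≤ μ.sum := by
  induction μ using Multiset.induction with
  | empty => simp
  | cons m μ IH =>
    rw [Multiset.card_cons, Multiset.sum_cons]
    have h1 := h m (Multiset.mem_cons_self m μ)
    have h2 := IH (fun x hx => h x (Multiset.mem_cons_of_mem hx))
    omega

lemma prod_formula (K : ℚ) (μ : Multiset ℕ) (h : ∀ m ∈ μ, 1 ≤ m) :
    (μ.map (fun m => K * (K - 1) ^ (m - 1))).prod
      = K ^ Multiset.card μ * (K - 1) ^ (μ.sum - Multiset.card μ) := by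
  induction μ using Multiset.induction with
  | empty => simp
  | cons m μ IH =>
    rw [Multiset.map_cons, Multiset.prod_cons,
      IH (fun x hx => h x (Multiset.mem_cons_of_mem hx)),
      Multiset.card_cons, Multiset.sum_cons]
    have h1 := h m (Multiset.mem_cons_self m μ)
    have h2 := card_le_sum' μ (fun x hx => h x (Multiset.mem_cons_of_mem hx))
    have he : m + μ.sum - (Multiset.card μ + 1) = (m - 1) + (μ.sum - Multiset.card μ) := by
      omega
    rw [he, pow_add, pow_succ]
    ring

lemma inj_t : Function.Injective (fun j : ℕ => ((j : ℚ) + 2) / ((j : ℚ) + 1)) := by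
  intro a b heq
  have ha : (a : ℚ) + 1 ≠ 0 := by positivity
  have hb : (b : ℚ) + 1 ≠ 0 := by positivity
  simp only at heq
  rw [div_eq_div_iff ha hb] at heq
  have : (a : ℚ) = b := by nlinarith [heq]
  exact_mod_cast this


lemma basisPoly_eq_X_of_key (n : ℕ) (hn : 1 ≤ n) (a : n.Partition → ℚ)
    (key : ∀ j : ℕ, ∑ l : n.Partition, a l * (((j : ℚ) + 2) ^ l.parts.card
        * ((j : ℚ) + 1) ^ (n - l.parts.card)) = ((j : ℚ) + 2) * ((j : ℚ) + 1) ^ (n - 1)) :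
    basisPoly n a = Polynomial.X := by
  have hroot : ∀ j : ℕ, (basisPoly n a - Polynomial.X).IsRoot (((j : ℚ) + 2) / ((j : ℚ) + 1)) := by
    intro j
    set c : ℚ := (j : ℚ) + 1 with hc
    have hc0 : c ≠ 0 := by positivity
    set K : ℚ := (j : ℚ) + 2 with hK
    set t : ℚ := K / c with ht
    rw [Polynomial.IsRoot, Polynomial.eval_sub, Polynomial.eval_X, sub_eq_zero]
    rw [basisPoly, Polynomial.eval_finset_sum]
    simp only [Polynomial.eval_mul, Polynomial.eval_C, Polynomial.eval_pow, Polynomial.eval_X]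
    have hcn : c ^ n ≠ 0 := pow_ne_zero _ hc0
    apply mul_right_cancel₀ hcn
    rw [Finset.sum_mul]
    have hterm : ∀ l : n.Partition, a l * t ^ l.parts.card * c ^ n
        = a l * (K ^ l.parts.card * c ^ (n - l.parts.card)) := by
      intro l
      have hle : l.parts.card ≤ n := by
        have := card_le_sum' l.parts (fun m hm => l.parts_pos hm)
        rwa [l.parts_sum] at this
      have hsplit : c ^ n = c ^ l.parts.card * c ^ (n - l.parts.card) := by
        rw [← pow_add]
        congr 1
        omega
      rw [ht, div_pow, hsplit]
      field_simp
    rw [Finset.sum_congr rfl (fun l _ => hterm l), key j]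
    have hn' : c ^ n = c * c ^ (n - 1) := by
      conv_lhs => rw [show n = 1 + (n - 1) by omega]
      rw [pow_add, pow_one]
    rw [ht, hn']
    field_simp
    ring
  have hinf : {x : ℚ | (basisPoly n a - Polynomial.X).IsRoot x}.Infinite := by
    apply Set.infinite_of_injective_forall_mem
      (f := fun j : ℕ => ((j : ℚ) + 2) / ((j : ℚ) + 1)) inj_t hroot

  have hzero := Polynomial.eq_zero_of_infinite_isRoot _ hinf
  have := sub_eq_zero.1 hzero
  exact this


/-- for any tree `T`, the tree polynomial is `τ_T(x) = x`; that is, if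
`X_T = Σ_{λ ⊢ n} a_λ X_{P_λ}` then `Σ_λ a_λ x^{ℓ(λ)} = x`. -/
theorem stmt_8 {V : Type} [Fintype V] (T : SimpleGraph V) (hT : T.IsTree)
    (n : ℕ) (hn : Fintype.card V = n) (a : n.Partition → ℚ)
    (ha : csf T = ∑ l : n.Partition, a l • XP l.parts) :
    basisPoly n a = Polynomial.X := by
  classical
  have : Nonempty V := hT.isConnected.nonempty
  have hn1 : 1 ≤ n := by
    have := Fintype.card_pos (α := V)
    omega
  apply basisPoly_eq_X_of_key n hn1 a
  intro j
  set k : ℕ := j + 2 with hk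
  have hk1 : 1 ≤ k := by omega
  -- left side: evaluate csf T
  have hL : evA k n (csf T) = ((k * (k - 1) ^ (n - 1) : ℕ) : ℚ) := by
    have h1 := evA_csf T k
    rw [hn] at h1
    rw [h1, tree_count n T hT hn k]
  -- right side: linearity
  have hR : evA k n (csf T) = ∑ l : n.Partition, a l * evA k n (XP l.parts) := by
    rw [ha, evA]
    have hco : ∀ d : ℕ →₀ ℕ, MvPowerSeries.coeff d (∑ l : n.Partition, a l • XP l.parts)
        = ∑ l : n.Partition, a l * MvPowerSeries.coeff d (XP l.parts) := by
      intro d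
      rw [map_sum]
      exact Finset.sum_congr rfl (fun l _ => by rw [map_smul, smul_eq_mul])
    rw [Finset.sum_congr rfl (fun d _ => hco d), Finset.sum_comm]
    refine Finset.sum_congr rfl (fun l _ => ?_)
    rw [← Finset.mul_sum]
    rfl
  have hXP : ∀ l : n.Partition, evA k n (XP l.parts)
      = (k : ℚ) ^ l.parts.card * ((k : ℚ) - 1) ^ (n - l.parts.card) := by
    intro l
    have hpos : ∀ m ∈ l.parts, 1 ≤ m := fun m hm => l.parts_pos hm
    have h1 : evA k l.parts.sum (XP l.parts)
        = (l.parts.map (fun m => (k : ℚ) * ((k : ℚ) - 1) ^ (m - 1))).prod :=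
      evA_XP l.parts hpos k hk1
    rw [l.parts_sum] at h1
    rw [h1, prod_formula _ _ hpos, l.parts_sum]
  have keyq : ∑ l : n.Partition, a l * ((k : ℚ) ^ l.parts.card
      * ((k : ℚ) - 1) ^ (n - l.parts.card)) = ((k * (k - 1) ^ (n - 1) : ℕ) : ℚ) := by
    rw [← hL, hR]
    exact Finset.sum_congr rfl (fun l _ => by rw [hXP l])
  have hc1 : (k : ℚ) = (j : ℚ) + 2 := by rw [hk]; push_cast; ring
  have hc2 : (k : ℚ) - 1 = (j : ℚ) + 1 := by rw [hc1]; ring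
  have hc3 : ((k * (k - 1) ^ (n - 1) : ℕ) : ℚ)
      = ((j : ℚ) + 2) * ((j : ℚ) + 1) ^ (n - 1) := by
    have hkm : k - 1 = j + 1 := by omega
    rw [hkm]
    push_cast
    rw [hc1]
  rw [hc2, hc1, hc3] at keyq
  exact keyq
end
end

section
/- For any graph G with n vertices, the sum over all partitions λ of n of the coefficients of X_G in the path basis equals 1: Σ_{λ⊢n} [X_{P_λ}]X_G = 1. Equivalently, τ_G(1) = 1. -/
open Polynomial

noncomputable section
open scoped Classical

/-- For `d` with all values `≤ 1`, colourings with fibre cardinalities given by `d`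
are exactly bijections `V ≃ d.support`. -/
def fiberEquiv {V : Type} [Fintype V] (G : SimpleGraph V) (d : ℕ →₀ ℕ)
    (hd : ∀ i, d i ≤ 1) :
    {κ : V → ℕ // (∀ u v, G.Adj u v → κ u ≠ κ v) ∧
      ∀ i : ℕ, (Finset.univ.filter (fun v => κ v = i)).card = d i}
    ≃ (V ≃ ↑(d.support)) where
  toFun κ := Equiv.ofBijective
    (fun v => (⟨κ.1 v, by
      rw [Finsupp.mem_support_iff, ← κ.2.2 (κ.1 v)]
      have hv : v ∈ Finset.univ.filter (fun w => κ.1 w = κ.1 v) := by simp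
      intro h
      rw [Finset.card_eq_zero] at h
      simp [h] at hv⟩ : d.support))
    (by
      constructor
      · intro u v huv
        by_contra hne
        have h2 : ({u, v} : Finset V) ⊆ Finset.univ.filter (fun w => κ.1 w = κ.1 v) := by
          intro w hw
          simp only [Finset.mem_insert, Finset.mem_singleton] at hw
          rcases hw with rfl | rfl
          · simpa using congrArg Subtype.val huv
          · simp
        have := Finset.card_le_card h2
        rw [Finset.card_pair hne, κ.2.2 (κ.1 v)] at this
        exact absurd (le_trans this (hd _)) (by norm_num)
      · rintro ⟨i, hi⟩
        rw [Finsupp.mem_support_iff, ← κ.2.2 i] at hi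
        have hne : (Finset.univ.filter (fun v => κ.1 v = i)).Nonempty :=
          Finset.card_pos.mp (Nat.pos_of_ne_zero hi)
        obtain ⟨v, hv⟩ := hne
        simp only [Finset.mem_filter] at hv
        exact ⟨v, Subtype.ext hv.2⟩)
  invFun e := ⟨fun v => (e v : ℕ), by
    constructor
    · intro u v huv h
      exact G.ne_of_adj huv (e.injective (Subtype.ext h))
    · intro i
      by_cases hi : i ∈ d.support
      · have hd1 : d i = 1 := le_antisymm (hd i) (by
          rwa [Finsupp.mem_support_iff, ← Nat.pos_iff_ne_zero] at hi)
        rw [hd1]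
        rw [Finset.card_eq_one]
        refine ⟨e.symm ⟨i, hi⟩, ?_⟩
        ext v
        simp only [Finset.mem_filter, Finset.mem_univ, true_and, Finset.mem_singleton]
        constructor
        · intro hv
          have : e v = ⟨i, hi⟩ := Subtype.ext hv
          rw [← this, Equiv.symm_apply_apply]
        · rintro rfl; simp
      · rw [Finsupp.notMem_support_iff] at hi
        rw [hi, Finset.card_eq_zero]
        ext v
        simp only [Finset.mem_filter, Finset.mem_univ, true_and, Finset.notMem_empty,
          iff_false]
        intro hv
        have hm := (e v).2
        rw [Finsupp.mem_support_iff, hv, hi] at hm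
        exact hm rfl⟩
  left_inv κ := Subtype.ext (funext fun v => rfl)
  right_inv e := Equiv.ext fun v => Subtype.ext rfl

lemma csf_coeff_s11 {V : Type} [Fintype V] (G : SimpleGraph V) (d : ℕ →₀ ℕ)
    (hd : ∀ i, d i ≤ 1) :
    csf G d = if d.support.card = Fintype.card V then (Nat.factorial (Fintype.card V) : ℚ) else 0 := by
  have h1 : csf G d = (Nat.card (V ≃ ↑(d.support)) : ℚ) := by
    show ((Nat.card _ : ℕ) : ℚ) = _
    congr 1
    refine Nat.card_congr (Equiv.trans (Equiv.subtypeEquivRight fun κ =>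
      and_congr_right fun _ => forall_congr' fun i => by
        rw [Finset.card_eq_sum_ones]) (fiberEquiv G d hd))
  rw [h1]
  by_cases h : d.support.card = Fintype.card V
  · rw [if_pos h, Nat.card_eq_fintype_card,
      Fintype.card_equiv (Fintype.equivOfCardEq (by simp [Fintype.card_coe, h]))]
  · rw [if_neg h]
    haveI : IsEmpty (V ≃ ↑(d.support)) := ⟨fun e => h (by
      simpa [Fintype.card_coe] using (Fintype.card_congr e).symm)⟩
    rw [Nat.card_of_isEmpty, Nat.cast_zero]

lemma ite_zero_mul_ite_zero' {P Q : Prop} [Decidable P] [Decidable Q] (a b : ℚ) :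
    (if P then a else 0) * (if Q then b else 0) = if P ∧ Q then a * b else 0 := by
  split_ifs <;> simp_all

lemma XP_coeff (μ : Multiset ℕ) : ∀ d : ℕ →₀ ℕ, (∀ i, d i ≤ 1) →
    XP μ d = if d.support.card = μ.sum then (Nat.factorial μ.sum : ℚ) else 0 := by
  induction μ using Multiset.induction_on with
  | empty =>
    intro d hd
    show (MvPowerSeries.coeff d) (1 : MvPowerSeries ℕ ℚ) = _
    rw [MvPowerSeries.coeff_one]
    simp only [Multiset.sum_zero, Nat.factorial_zero, Nat.cast_one,
      Finset.card_eq_zero, Finsupp.support_eq_empty]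
  | cons m μ ih =>
    intro d hd
    have hXP : XP (m ::ₘ μ) = csf (SimpleGraph.pathGraph m) * XP μ := by
      simp [XP, Multiset.map_cons, Multiset.prod_cons]
    have hXPd : XP (m ::ₘ μ) d
        = (MvPowerSeries.coeff d) (csf (SimpleGraph.pathGraph m) * XP μ) := by
      rw [← hXP]; rfl
    rw [hXPd, MvPowerSeries.coeff_mul]
    simp only [Multiset.sum_cons]
    have hval : ∀ p : (ℕ →₀ ℕ) × (ℕ →₀ ℕ), p ∈ Finset.HasAntidiagonal.antidiagonal d →
        ∀ i, p.1 i + p.2 i = d i := by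
      intro p hp i
      rw [Finset.HasAntidiagonal.mem_antidiagonal] at hp
      rw [← hp, Finsupp.add_apply]
    have key : ∑ p ∈ Finset.HasAntidiagonal.antidiagonal d,
        (MvPowerSeries.coeff p.1) (csf (SimpleGraph.pathGraph m)) *
          (MvPowerSeries.coeff p.2) (XP μ)
        = ∑ s ∈ d.support.powerset,
            (if s.card = m then (Nat.factorial m : ℚ) else 0) *
              (if (d.support \ s).card = μ.sum then (Nat.factorial μ.sum : ℚ) else 0) := by
      refine Finset.sum_nbij' (i := fun p => p.1.support)
        (j := fun s => (d.filter (· ∈ s), d.filter (fun i => i ∉ s))) ?_ ?_ ?_ ?_ ?_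
      · intro p hp
        rw [Finset.mem_powerset]
        intro i hi
        rw [Finsupp.mem_support_iff] at hi ⊢
        have := hval p hp i
        omega
      · intro s hs
        rw [Finset.HasAntidiagonal.mem_antidiagonal]
        exact Finsupp.filter_pos_add_filter_neg d _
      · intro p hp
        have h1 := hval p hp
        obtain ⟨p1, p2⟩ := p
        simp only [Prod.mk.injEq]
        constructor <;> ext i <;> rw [Finsupp.filter_apply] <;> split_ifs with h <;>
          rw [Finsupp.mem_support_iff] at h <;>
          · have h2 := hd i
            have h3 := h1 i
            simp only at h h3 ⊢
            omega
      · intro s hs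
        rw [Finset.mem_powerset] at hs
        show (Finsupp.filter (· ∈ s) d).support = s
        rw [Finsupp.support_filter]
        ext i
        simp only [Finset.mem_filter]
        exact ⟨fun h => h.2, fun h => ⟨hs h, h⟩⟩
      · intro p hp
        have h1 := hval p hp
        have hle1 : ∀ i, p.1 i ≤ 1 := fun i => by have := hd i; have := h1 i; omega
        have hle2 : ∀ i, p.2 i ≤ 1 := fun i => by have := hd i; have := h1 i; omega
        have hs2 : p.2.support = d.support \ p.1.support := by
          ext i
          simp only [Finset.mem_sdiff, Finsupp.mem_support_iff]
          have := hd i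
          have := h1 i
          constructor
          · intro h
            exact ⟨by omega, by omega⟩
          · intro h
            have := h.1
            have := h.2
            omega
        rw [MvPowerSeries.coeff_apply, MvPowerSeries.coeff_apply,
          csf_coeff_s11 _ _ hle1, ih _ hle2, hs2]
        simp [Fintype.card_fin]
    rw [key]
    have hsum : ∀ s ∈ d.support.powerset,
        (if s.card = m then (Nat.factorial m : ℚ) else 0) *
          (if (d.support \ s).card = μ.sum then (Nat.factorial μ.sum : ℚ) else 0)
        = if s.card = m ∧ d.support.card = m + μ.sum
            then ((Nat.factorial m : ℚ) * Nat.factorial μ.sum) else 0 := by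
      intro s hs
      rw [Finset.mem_powerset] at hs
      rw [ite_zero_mul_ite_zero']
      refine if_congr ?_ rfl rfl
      have hc1 := Finset.card_sdiff_of_subset hs
      have hc2 := Finset.card_le_card hs
      constructor
      · rintro ⟨h1, h2⟩
        exact ⟨h1, by omega⟩
      · rintro ⟨h1, h2⟩
        exact ⟨h1, by omega⟩
    rw [Finset.sum_congr rfl hsum]
    by_cases hc : d.support.card = m + μ.sum
    · simp only [hc, and_true, if_pos]
      rw [← Finset.sum_filter, ← Finset.powersetCard_eq_filter, Finset.sum_const,
        Finset.card_powersetCard, hc, nsmul_eq_mul]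
      have hnat : (m + μ.sum).choose m * (Nat.factorial m * Nat.factorial μ.sum)
          = Nat.factorial (m + μ.sum) := by
        have h := Nat.add_choose_mul_factorial_mul_factorial μ.sum m
        rw [add_comm μ.sum m] at h
        rw [← h]
        ring
      push_cast [← hnat]
      ring
    · have h1 : ¬ (d.support.card = m + μ.sum) := hc
      rw [if_neg h1]
      apply Finset.sum_eq_zero
      intro s hs
      rw [if_neg]
      rintro ⟨-, h⟩
      exact hc h

/-- for any graph `G` on `n` vertices, the sum over all partitions `λ ⊢ n` of
the path-basis coefficients of `X_G` equals `1`; equivalently `τ_G(1) = 1`. -/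
theorem stmt_11 {V : Type} [Fintype V] (G : SimpleGraph V) (n : ℕ)
    (hn : Fintype.card V = n) (a : n.Partition → ℚ)
    (ha : csf G = ∑ l : n.Partition, a l • XP l.parts) :
    ∑ l : n.Partition, a l = 1 := by
  classical
  set d0 : ℕ →₀ ℕ := ⟨Finset.range n, fun i => if i < n then 1 else 0, fun a => by
    simp [Finset.mem_range]⟩ with hd0def
  have hd0 : ∀ i, d0 i ≤ 1 := by
    intro i
    show (if i < n then 1 else 0) ≤ 1
    split_ifs <;> simp
  have hsupp : d0.support = Finset.range n := rfl
  have hL : csf G d0 = (Nat.factorial n : ℚ) := by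
    rw [csf_coeff_s11 G d0 hd0, hsupp, Finset.card_range, hn, if_pos rfl]
  have hR : ∀ l : n.Partition, XP l.parts d0 = (Nat.factorial n : ℚ) := by
    intro l
    rw [XP_coeff l.parts d0 hd0, hsupp, Finset.card_range, l.parts_sum, if_pos rfl]
  have h := congrArg (MvPowerSeries.coeff d0) ha
  rw [map_sum] at h
  simp only [map_smul, smul_eq_mul, MvPowerSeries.coeff_apply] at h
  rw [hL, Finset.sum_congr rfl (fun l _ => by rw [hR l]), ← Finset.sum_mul] at h
  have hfac : (Nat.factorial n : ℚ) ≠ 0 := Nat.cast_ne_zero.mpr (Nat.factorial_ne_zero n)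
  have h2 : (∑ l : n.Partition, a l) * (Nat.factorial n : ℚ)
      = 1 * (Nat.factorial n : ℚ) := by
    rw [one_mul, ← h]
  exact mul_right_cancel₀ hfac h2
end
end

section
/- Let {G_i} be any family of connected graphs with G_i having i vertices, and let G be any graph with n vertices. Then the sum over all partitions λ of n of the coefficients of X_G in the chromatic basis {X_{G_λ}} equals 1: Σ_{λ⊢n} [X_{G_λ}]X_G = 1. -/
open Polynomial

noncomputable section
open scoped Classical

/-- Indicator finsupp of a finset. -/
def ind (S : Finset ℕ) : ℕ →₀ ℕ := Finsupp.indicator S fun _ _ => 1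

lemma ind_apply (S : Finset ℕ) (i : ℕ) : ind S i = if i ∈ S then 1 else 0 := by
  simp [ind, Finsupp.indicator_apply]

lemma ind_support (S : Finset ℕ) : (ind S).support = S := by
  ext i
  rw [Finsupp.mem_support_iff, ind_apply]
  by_cases h : i ∈ S <;> simp [h]

lemma ind_eq_zero_iff (S : Finset ℕ) : ind S = 0 ↔ S = ∅ := by
  constructor
  · intro h
    have := ind_support S
    rw [h] at this; simpa using this.symm
  · rintro rfl; ext i; simp [ind_apply]

/-- Key computation: coefficient of csf at a squarefree monomial. -/
lemma coeff_csf_ind {V : Type} [Fintype V] (G : SimpleGraph V) (S : Finset ℕ) :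
    MvPowerSeries.coeff (ind S) (csf G) =
      if Fintype.card V = S.card then (S.card).factorial else 0 := by
  have hcoeff : MvPowerSeries.coeff (ind S) (csf G) =
      (Nat.card {κ : V → ℕ // (∀ u v, G.Adj u v → κ u ≠ κ v) ∧
        ∀ i : ℕ, ∑ v ∈ Finset.univ.filter (fun v => κ v = i), (1:ℕ) = ind S i} : ℚ) := rfl
  -- replace the sum of ones by the card of the fiber
  have hfib : ∀ (κ : V → ℕ) (i : ℕ),
      ∑ v ∈ Finset.univ.filter (fun v => κ v = i), (1:ℕ)
        = (Finset.univ.filter (fun v => κ v = i)).card := by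
    intro κ i; simp
  -- membership of values
  have hmem : ∀ (κ : V → ℕ),
      (∀ i : ℕ, (Finset.univ.filter (fun v => κ v = i)).card = ind S i) →
      ∀ v : V, κ v ∈ S := by
    intro κ hκ v
    by_contra hv
    have h0 := hκ (κ v)
    rw [ind_apply, if_neg hv] at h0
    have : v ∈ Finset.univ.filter (fun w => κ w = κ v) := by simp
    have := Finset.card_pos.mpr ⟨v, this⟩
    omega
  have hcard : ∀ (κ : V → ℕ),
      (∀ i : ℕ, (Finset.univ.filter (fun v => κ v = i)).card = ind S i) →
      Fintype.card V = S.card := by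
    intro κ hκ
    have h1 : (Finset.univ : Finset V).card = ∑ i ∈ S, (Finset.univ.filter (fun v => κ v = i)).card :=
      Finset.card_eq_sum_card_fiberwise (fun v _ => hmem κ hκ v)
    rw [Fintype.card, h1]
    calc ∑ i ∈ S, (Finset.univ.filter (fun v => κ v = i)).card
        = ∑ i ∈ S, 1 := by
          apply Finset.sum_congr rfl
          intro i hi; rw [hκ i, ind_apply, if_pos hi]
      _ = S.card := by simp
  by_cases h : Fintype.card V = S.card
  · rw [if_pos h, hcoeff]
    -- build a bijection with V ≃ S
    have hSc : Fintype.card S = S.card := Fintype.card_coe S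
    have hVe : Nonempty (V ≃ S) := by
      apply Fintype.card_eq.mp; rw [hSc, h]
    -- the map Φ : (V ≃ S) → subtype
    have key : Nat.card {κ : V → ℕ // (∀ u v, G.Adj u v → κ u ≠ κ v) ∧
        ∀ i : ℕ, ∑ v ∈ Finset.univ.filter (fun v => κ v = i), (1:ℕ) = ind S i}
        = Nat.card (V ≃ S) := by
      symm
      refine Nat.card_eq_of_bijective (fun e => ⟨fun v => ((e v : ℕ)), ?_, ?_⟩) ?_
      · intro u v huv
        intro hc
        exact G.ne_of_adj huv (e.injective (Subtype.ext hc))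
      · intro i
        rw [hfib, ind_apply]
        by_cases hi : i ∈ S
        · rw [if_pos hi]
          have : Finset.univ.filter (fun v => ((e v : ℕ)) = i) = {e.symm ⟨i, hi⟩} := by
            ext v
            simp only [Finset.mem_filter, Finset.mem_univ, true_and, Finset.mem_singleton]
            constructor
            · intro hv
              have : e v = ⟨i, hi⟩ := Subtype.ext hv
              rw [← this]; simp
            · rintro rfl; simp
          rw [this]; simp
        · rw [if_neg hi]
          have : Finset.univ.filter (fun v => ((e v : ℕ)) = i) = ∅ := by
            ext v
            simp only [Finset.mem_filter, Finset.mem_univ, true_and, Finset.notMem_empty,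
              iff_false]
            intro hv
            exact hi (hv ▸ (e v).2)
          rw [this]; simp
      · constructor
        · intro e e' hee
          have := congrArg Subtype.val hee
          ext v
          have := congrFun this v
          first
          | exact this
          | exact Subtype.ext this
        · rintro ⟨κ, hp, hκ⟩
          simp only [hfib] at hκ
          have hmemκ := hmem κ hκ
          set f : V → S := fun v => ⟨κ v, hmemκ v⟩ with hf
          have hinj : Function.Injective f := by
            intro u v huv
            have hval : κ u = κ v := congrArg Subtype.val huv
            have h1 := hκ (κ u)
            rw [ind_apply, if_pos (hmemκ u)] at h1
            have hu : u ∈ Finset.univ.filter (fun w => κ w = κ u) := by simp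
            have hv : v ∈ Finset.univ.filter (fun w => κ w = κ u) := by simp [hval]
            have := Finset.card_le_one.mp (le_of_eq h1) u hu v hv
            exact this
          have hsurj : Function.Surjective f := by
            intro ⟨i, hi⟩
            have h1 := hκ i
            rw [ind_apply, if_pos hi] at h1
            obtain ⟨v, hv⟩ := Finset.card_pos.mp (by omega : 0 < (Finset.univ.filter (fun v => κ v = i)).card)
            simp only [Finset.mem_filter] at hv
            exact ⟨v, Subtype.ext hv.2⟩
          refine ⟨Equiv.ofBijective f ⟨hinj, hsurj⟩, ?_⟩
          apply Subtype.ext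
          funext v
          rfl
    rw [key]
    simp [Nat.card_eq_fintype_card, Fintype.card_equiv hVe.some, h]
  · rw [if_neg h, hcoeff]
    have : IsEmpty {κ : V → ℕ // (∀ u v, G.Adj u v → κ u ≠ κ v) ∧
        ∀ i : ℕ, ∑ v ∈ Finset.univ.filter (fun v => κ v = i), (1:ℕ) = ind S i} := by
      constructor
      rintro ⟨κ, _, hκ⟩
      simp only [hfib] at hκ
      exact h (hcard κ hκ)
    rw [Nat.card_of_isEmpty]

lemma ind_add_sdiff {T S : Finset ℕ} (h : T ⊆ S) : ind T + ind (S \ T) = ind S := by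
  ext i
  simp only [Finsupp.add_apply, ind_apply, Finset.mem_sdiff]
  by_cases h1 : i ∈ T <;> by_cases h2 : i ∈ S <;> simp [h1, h2] <;> exact h2 (h h1)

lemma antidiag_ind (p : (ℕ →₀ ℕ) × (ℕ →₀ ℕ)) (S : Finset ℕ)
    (hp : p ∈ Finset.HasAntidiagonal.antidiagonal (ind S)) :
    p.1.support ⊆ S ∧ p.1 = ind p.1.support ∧ p.2 = ind (S \ p.1.support) := by
  rw [Finset.HasAntidiagonal.mem_antidiagonal] at hp
  have hpt : ∀ i, p.1 i + p.2 i = (if i ∈ S then 1 else 0) := by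
    intro i
    rw [← ind_apply, ← hp, Finsupp.add_apply]
  have hsub : p.1.support ⊆ S := by
    intro i hi
    rw [Finsupp.mem_support_iff] at hi
    have := hpt i
    by_contra hiS
    rw [if_neg hiS] at this
    omega
  refine ⟨hsub, ?_, ?_⟩
  · ext i
    rw [ind_apply]
    by_cases hi : i ∈ p.1.support
    · rw [if_pos hi]
      rw [Finsupp.mem_support_iff] at hi
      have := hpt i
      by_cases hiS : i ∈ S <;> simp [hiS] at this <;> omega
    · rw [if_neg hi]
      rw [Finsupp.mem_support_iff, not_not] at hi
      exact hi
  · ext i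
    simp only [ind_apply, Finset.mem_sdiff]
    have := hpt i
    by_cases hiS : i ∈ S <;> by_cases hi : i ∈ p.1.support <;>
      rw [Finsupp.mem_support_iff] at hi <;> simp [hiS, hi] at this ⊢ <;> omega

lemma coeff_prod_csf (Gf : (i : ℕ) → SimpleGraph (Fin i)) (μ : Multiset ℕ) (S : Finset ℕ) :
    MvPowerSeries.coeff (ind S) ((μ.map fun m => csf (Gf m)).prod) =
      if μ.sum = S.card then ((S.card).factorial : ℚ) else 0 := by
  induction μ using Multiset.induction generalizing S with
  | empty =>
      simp only [Multiset.map_zero, Multiset.prod_zero, Multiset.sum_zero]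
      rw [MvPowerSeries.coeff_one]
      by_cases h : S = ∅
      · subst h
        rw [if_pos ((ind_eq_zero_iff _).mpr rfl)]
        split_ifs with hc <;> simp_all
      · rw [if_neg (fun hc => h ((ind_eq_zero_iff _).mp hc))]
        exact (if_neg (fun hc => h (Finset.card_eq_zero.mp hc.symm))).symm
  | cons m μ ih =>
      rw [Multiset.map_cons, Multiset.prod_cons, MvPowerSeries.coeff_mul]
      rw [Finset.sum_nbij' (i := fun p => p.1.support) (j := fun T => (ind T, ind (S \ T)))
        (t := S.powerset)
        (g := fun T => (MvPowerSeries.coeff (ind T)) (csf (Gf m)) *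
          (MvPowerSeries.coeff (ind (S \ T))) ((μ.map fun m => csf (Gf m)).prod))
        (fun p hp => Finset.mem_powerset.mpr (antidiag_ind p S hp).1)
        (fun T hT => Finset.HasAntidiagonal.mem_antidiagonal.mpr (ind_add_sdiff (Finset.mem_powerset.mp hT)))
        (fun p hp => by
          obtain ⟨h1, h2, h3⟩ := antidiag_ind p S hp
          exact Prod.ext h2.symm h3.symm)
        (fun T hT => ind_support T)
        (fun p hp => by
          obtain ⟨h1, h2, h3⟩ := antidiag_ind p S hp
          show _ = (MvPowerSeries.coeff (ind p.1.support)) _ *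
            (MvPowerSeries.coeff (ind (S \ p.1.support))) _
          rw [← h2, ← h3])]
      -- now evaluate each term
      have hterm : ∀ T ∈ S.powerset,
          (MvPowerSeries.coeff (ind T)) (csf (Gf m)) *
            (MvPowerSeries.coeff (ind (S \ T))) ((μ.map fun m => csf (Gf m)).prod)
          = if T.card = m ∧ μ.sum = S.card - m then ((m.factorial : ℚ) * (S.card - m).factorial) else 0 := by
        intro T hT
        have hTS := Finset.mem_powerset.mp hT
        rw [coeff_csf_ind, ih, Fintype.card_fin, Finset.card_sdiff_of_subset hTS]
        by_cases h1 : m = T.card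
        · subst h1
          by_cases h2 : μ.sum = S.card - T.card <;> simp [h2]
        · rw [if_neg h1,
            if_neg (show ¬(T.card = m ∧ μ.sum = S.card - m) from fun hc => h1 hc.1.symm)]
          simp
      rw [Finset.sum_congr rfl hterm]
      rw [Finset.sum_ite, Finset.sum_const_zero, add_zero, Finset.sum_const, nsmul_eq_mul]
      rw [Multiset.sum_cons]
      by_cases h : m + μ.sum = S.card
      · rw [if_pos h]
        have hm : m ≤ S.card := by omega
        have hfilter : S.powerset.filter (fun T => T.card = m ∧ μ.sum = S.card - m)
            = S.powersetCard m := by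
          rw [Finset.powersetCard_eq_filter]
          apply Finset.filter_congr
          intro T hT
          constructor
          · exact fun hc => hc.1
          · intro hc
            refine ⟨hc, ?_⟩
            omega
        rw [hfilter, Finset.card_powersetCard]
        have := Nat.choose_mul_factorial_mul_factorial hm
        push_cast [← this]
        ring
      · rw [if_neg h]
        have hfilter : S.powerset.filter (fun T => T.card = m ∧ μ.sum = S.card - m) = ∅ := by
          apply Finset.filter_false_of_mem
          intro T hT
          rintro ⟨rfl, h2⟩
          have := Finset.card_le_card (Finset.mem_powerset.mp hT)
          omega
        rw [hfilter]
        simp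

/-- let `{G_i}` be any family of connected graphs with `G_i` having `i`
vertices, and let `G` be any graph with `n` vertices.  Then the sum over all partitions
`λ ⊢ n` of the coefficients of `X_G` in the chromatic basis `{X_{G_λ}}` equals `1`. -/

theorem stmt_12 (Gfam : (i : ℕ) → SimpleGraph (Fin i))
    (hGfam : ∀ i, 0 < i → (Gfam i).Connected)
    {V : Type} [Fintype V] (G : SimpleGraph V) (n : ℕ) (hn : Fintype.card V = n)
    (a : n.Partition → ℚ)
    (ha : csf G = ∑ l : n.Partition, a l • (l.parts.map (fun m => csf (Gfam m))).prod) :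
    ∑ l : n.Partition, a l = 1 := by
  have hco := congrArg (MvPowerSeries.coeff (ind (Finset.range n))) ha
  rw [map_sum] at hco
  have hL : MvPowerSeries.coeff (ind (Finset.range n)) (csf G) = (n.factorial : ℚ) := by
    rw [coeff_csf_ind, Finset.card_range, if_pos hn]
  have hR : ∀ l : n.Partition,
      MvPowerSeries.coeff (ind (Finset.range n))
        (a l • (l.parts.map (fun m => csf (Gfam m))).prod) = a l * (n.factorial : ℚ) := by
    intro l
    rw [map_smul, smul_eq_mul, coeff_prod_csf, Finset.card_range, if_pos l.parts_sum]
  rw [hL, Finset.sum_congr rfl (fun l _ => hR l), ← Finset.sum_mul] at hco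
  have hne : (n.factorial : ℚ) ≠ 0 := Nat.cast_ne_zero.mpr n.factorial_ne_zero
  have h1 : (∑ l : n.Partition, a l) * (n.factorial : ℚ) = 1 * (n.factorial : ℚ) := by
    rw [one_mul]
    exact hco.symm
  exact mul_right_cancel₀ hne h1
end
end
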